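/- Let M ≥ 1, P > 0, N > 0, L ≥ 1 be given, and define p_k = (N/M)·(1 + MP/N)^((L−k)/L)·((1 + MP/N)^(1/L) − 1) for k = 1, …, L. Then (a) ∑_{k=1}^L p_k = P, and (b) for every k, SIR_k := p_k/(M·P − M·∑_{j<k} p_j − p_k + N) = (A^(1/L) − 1)/((M−1)·A^(1/L) + 1), where A = 1 + MP/N; in particular SIR_k is independent of k. -/

import Mathlib

theorem stmt3 (M L : ℕ) (P N : ℝ) (hM : 1 ≤ M) (hL : 1 ≤ L)
    (hP : 0 < P) (hN : 0 < N) :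
    let A : ℝ := 1 + M * P / N
    let p : ℕ → ℝ := fun k =>
      (N / M) * A ^ (((L : ℝ) - k) / L) * (A ^ ((1 : ℝ) / L) - 1)
    (∑ k ∈ Finset.Icc 1 L, p k = P) ∧
    ∀ k ∈ Finset.Icc 1 L,
      p k / ((M : ℝ) * P - M * (∑ j ∈ Finset.Ico 1 k, p j) - p k + N) =
        (A ^ ((1 : ℝ) / L) - 1) / (((M : ℝ) - 1) * A ^ ((1 : ℝ) / L) + 1) := by
  intro A p
  have hM0 : (0:ℝ) < M := by exact_mod_cast Nat.lt_of_lt_of_le Nat.zero_lt_one hM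
  have hL0 : (0:ℝ) < L := by exact_mod_cast hL
  have hLne : (L:ℝ) ≠ 0 := ne_of_gt hL0
  have hA0 : (0:ℝ) < A := by
    have : 0 < (M:ℝ) * P / N := by positivity
    show (0:ℝ) < 1 + (M:ℝ) * P / N
    linarith
  set B : ℝ := A ^ ((1:ℝ)/L) with hB
  have hB0 : 0 < B := Real.rpow_pos_of_pos hA0 _
  set f : ℕ → ℝ := fun i => (N/(M:ℝ)) * A ^ (((L:ℝ) - i)/L) with hf
  have hstep : ∀ i : ℕ, p (i+1) = f i - f (i+1) := by
    intro i
    have h2 : A ^ (((L:ℝ) - (i:ℝ))/L) = A ^ (((L:ℝ) - ((i:ℕ)+1:ℕ))/L) * B := by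
      rw [hB, ← Real.rpow_add hA0]
      congr 1
      push_cast
      field_simp
      ring
    simp only [p, f]
    push_cast at h2 ⊢
    rw [h2]
    ring
  -- partial sums
  have hpartial : ∀ k : ℕ, ∑ j ∈ Finset.Ico 1 (k+1), p j = f 0 - f k := by
    intro k
    rw [Finset.sum_Ico_eq_sum_range]
    simp only [Nat.add_sub_cancel]
    have : ∀ i ∈ Finset.range k, p (1 + i) = f i - f (i+1) := by
      intro i _
      rw [add_comm]; exact hstep i
    rw [Finset.sum_congr rfl this, Finset.sum_range_sub' f k]
  have hf0 : f 0 = (N/(M:ℝ)) * A := by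
    simp only [f, Nat.cast_zero, sub_zero, div_self hLne, Real.rpow_one]
  have hfL : f L = N/(M:ℝ) := by
    simp only [f, sub_self, zero_div, Real.rpow_zero, mul_one]
  have hNA : (N:ℝ) * A = N + M * P := by
    show N * (1 + (M:ℝ) * P / N) = N + M * P
    field_simp
  have hsum : ∑ k ∈ Finset.Icc 1 L, p k = P := by
    have : Finset.Icc 1 L = Finset.Ico 1 (L+1) := by
      exact (Finset.Ico_add_one_right_eq_Icc 1 L).symm
    rw [this, hpartial L, hf0, hfL]
    field_simp
    linarith [hNA]
  refine ⟨hsum, ?_⟩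
  intro k hk
  rw [Finset.mem_Icc] at hk
  obtain ⟨hk1, hkL⟩ := hk
  -- partial sum up to k
  obtain ⟨m, rfl⟩ : ∃ m, k = m + 1 := ⟨k - 1, (Nat.succ_pred_eq_of_pos hk1).symm⟩
  rw [hpartial m]
  set t : ℝ := A ^ (((L:ℝ) - ((m:ℕ)+1:ℕ))/L) with ht
  have ht0 : 0 < t := Real.rpow_pos_of_pos hA0 _
  have hfm : f m = (N/(M:ℝ)) * (t * B) := by
    simp only [f, ht, hB, ← Real.rpow_add hA0]
    congr 2
    push_cast
    field_simp
    ring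
  have hpk : p (m+1) = (N/(M:ℝ)) * t * (B - 1) := by
    simp only [p, ht, hB]
  rw [hpk, hf0, hfm]
  have hden : (M:ℝ) * P - M * ((N/(M:ℝ)) * A - (N/(M:ℝ)) * (t*B)) - (N/(M:ℝ)) * t * (B-1) + N
      = (N/(M:ℝ)) * t * (((M:ℝ) - 1) * B + 1) := by
    have hMNe : (M:ℝ) ≠ 0 := ne_of_gt hM0
    field_simp
    nlinarith [hNA]
  rw [hden]
  have hc : (N/(M:ℝ)) * t ≠ 0 := by positivity
  have : (N/(M:ℝ)) * t * (B - 1) / ((N/(M:ℝ)) * t * (((M:ℝ) - 1) * B + 1))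
      = (B - 1) / (((M:ℝ) - 1) * B + 1) := mul_div_mul_left _ _ hc
  rw [this]
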